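/- Let U ⊆ ℂⁿ be a nonempty connected open set, let G be a subgroup of the group of permutations of U all of whose elements are holomorphic, and let p ∈ U be a point fixed by every element of G. Assume there is a fundamental system of neighborhoods {V_ν} of p inside U (i.e., a family of subsets of U, each a neighborhood of p, such that every neighborhood of p contains some V_ν) with the property that each V_ν is invariant under every element of G and every point of each V_ν has finite G-orbit. Then G is a finite group. -/

import Mathlib

open scoped Classical


open Polynomial in
private lemma aux_eval_charpoly {n : ℕ} (M : Matrix (Fin n) (Fin n) ℂ) (t : ℂ) :
    M.charpoly.eval t = (t • (1 : Matrix (Fin n) (Fin n) ℂ) - M).det := by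
  have : M.charpoly.eval t = ((evalRingHom t) M.charpoly) := rfl
  rw [this, Matrix.charpoly, RingHom.map_det]
  congr 1
  ext i j
  by_cases h : i = j
  · subst h
    simp [Matrix.charmatrix_apply, Matrix.one_apply, Matrix.smul_apply]
  · simp [Matrix.charmatrix_apply, Matrix.one_apply, h, Matrix.smul_apply,
      Matrix.diagonal_apply_ne _ h]

private lemma aux_root_pow_one {n N : ℕ} {M : Matrix (Fin n) (Fin n) ℂ}
    (hM : M ^ N = 1) {t : ℂ} (ht : M.charpoly.IsRoot t) : t ^ N = 1 := by
  have hdet : (t • (1 : Matrix (Fin n) (Fin n) ℂ) - M).det = 0 := by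
    rw [← aux_eval_charpoly]; exact ht
  obtain ⟨v, hv0, hv⟩ := Matrix.exists_mulVec_eq_zero_iff.mpr hdet
  have heig : M.mulVec v = t • v := by
    have := hv
    rw [Matrix.sub_mulVec, Matrix.smul_mulVec, Matrix.one_mulVec, sub_eq_zero] at this
    exact this.symm
  have hpow : ∀ k : ℕ, (M ^ k).mulVec v = t ^ k • v := by
    intro k
    induction k with
    | zero => simp [Matrix.one_mulVec]
    | succ k ih =>
        rw [pow_succ', pow_succ']
        rw [← Matrix.mulVec_mulVec, ih, Matrix.mulVec_smul, heig, smul_smul, mul_comm]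
  have := hpow N
  rw [hM, Matrix.one_mulVec] at this
  by_contra hne
  apply hv0
  have : (t ^ N - 1) • v = 0 := by
    rw [sub_smul, one_smul, ← this, sub_self]
  have h2 := smul_eq_zero.mp this
  rcases h2 with h2 | h2
  · exact absurd (by linear_combination h2 : t ^ N = 1) hne
  · exact h2

private lemma aux_trace_mem {n N : ℕ} (hn : 1 ≤ n) (hN : 1 ≤ N)
    {M : Matrix (Fin n) (Fin n) ℂ} (hM : M ^ N = 1) :
    ∃ s : Multiset ℂ, Multiset.card s = n ∧ (∀ z ∈ s, z ^ N = 1) ∧ s.sum = M.trace := by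
  refine ⟨M.charpoly.roots, ?_, ?_, (Matrix.trace_eq_sum_roots_charpoly M).symm⟩
  · rw [Polynomial.splits_iff_card_roots.mp (IsAlgClosed.splits M.charpoly),
      Matrix.charpoly_natDegree_eq_dim, Fintype.card_fin]
  · intro z hz
    exact aux_root_pow_one hM (Polynomial.isRoot_of_mem_roots hz)

private lemma aux_eq_one_of_trace {n N : ℕ} (hn : 1 ≤ n) (hN : 1 ≤ N)
    {M : Matrix (Fin n) (Fin n) ℂ} (hM : M ^ N = 1) (htr : M.trace = (n : ℂ)) :
    M = 1 := by
  have hnontriv : Nontrivial (Matrix (Fin n) (Fin n) ℂ) := by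
    have : Nonempty (Fin n) := ⟨⟨0, hn⟩⟩
    infer_instance
  -- all roots of the charpoly are 1
  obtain ⟨s, hcard, hpow, hsum⟩ := aux_trace_mem hn hN hM
  have habs : ∀ z ∈ s, ‖z‖ = 1 := by
    intro z hz
    have h1 : ‖z‖ ^ N = 1 := by
      rw [← norm_pow, hpow z hz, norm_one]
    rcases lt_trichotomy (‖z‖) 1 with h | h | h
    · exact absurd h1 (by nlinarith [pow_lt_one₀ (norm_nonneg z) h (Nat.one_le_iff_ne_zero.mp hN)])
    · exact h
    · exact absurd h1 (by nlinarith [one_lt_pow₀ h (Nat.one_le_iff_ne_zero.mp hN)])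
  have hroots := aux_trace_mem hn hN hM
  -- redo with explicit roots
  clear hroots
  set r := M.charpoly.roots with hr
  have hcard : Multiset.card r = n := by
    rw [hr, Polynomial.splits_iff_card_roots.mp (IsAlgClosed.splits M.charpoly),
      Matrix.charpoly_natDegree_eq_dim, Fintype.card_fin]
  have hsum : r.sum = (n : ℂ) := by
    rw [hr, ← Matrix.trace_eq_sum_roots_charpoly M, htr]
  have hpow : ∀ z ∈ r, z ^ N = 1 := fun z hz =>
    aux_root_pow_one hM (Polynomial.isRoot_of_mem_roots hz)
  have habs : ∀ z ∈ r, ‖z‖ = 1 := by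
    intro z hz
    have h1 : ‖z‖ ^ N = 1 := by
      rw [← norm_pow, hpow z hz, norm_one]
    rcases lt_trichotomy (‖z‖) 1 with h | h | h
    · exact absurd h1 (by nlinarith [pow_lt_one₀ (norm_nonneg z) h (Nat.one_le_iff_ne_zero.mp hN)])
    · exact h
    · exact absurd h1 (by nlinarith [one_lt_pow₀ h (Nat.one_le_iff_ne_zero.mp hN)])
  have hreach : ∀ z ∈ r, z.re ≤ 1 := by
    intro z hz
    calc z.re ≤ ‖z‖ := Complex.re_le_norm z
    _ = 1 := habs z hz
  have hresum : (r.map Complex.re).sum = (n : ℝ) := by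
    have h1 : (Complex.reAddGroupHom) r.sum = (r.map Complex.re).sum :=
      map_multiset_sum Complex.reAddGroupHom r
    simp only [Complex.reAddGroupHom, AddMonoidHom.coe_mk, ZeroHom.coe_mk] at h1
    rw [← h1, hsum]
    simp
  have hallone : ∀ z ∈ r, z = 1 := by
    by_contra hcon
    push_neg at hcon
    obtain ⟨z₀, hz₀, hz₀ne⟩ := hcon
    have hz₀lt : z₀.re < 1 := by
      rcases lt_or_eq_of_le (hreach z₀ hz₀) with h | h
      · exact h
      · exfalso
        apply hz₀ne
        have habs₀ := habs z₀ hz₀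
        have h2 : ‖z₀‖ ^ 2 = 1 := by rw [habs₀]; norm_num
        rw [Complex.sq_norm, Complex.normSq_apply, h] at h2
        have : z₀.im = 0 := by nlinarith
        exact Complex.ext h this
    have hlt : (r.map Complex.re).sum < (r.map (fun _ => (1:ℝ))).sum :=
      Multiset.sum_lt_sum hreach ⟨z₀, hz₀, hz₀lt⟩
    rw [hresum, Multiset.map_const', Multiset.sum_replicate, hcard] at hlt
    simp at hlt
  -- now the minpoly argument
  have hint : IsIntegral ℂ M := IsIntegral.of_finite ℂ M
  have hdvd : minpoly ℂ M ∣ (Polynomial.X ^ N - 1 : Polynomial ℂ) := by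
    apply minpoly.dvd
    simp [hM]
  have hsepXN : (Polynomial.X ^ N - 1 : Polynomial ℂ).Separable := by
    have := Polynomial.separable_X_pow_sub_C (1:ℂ)
      (by exact_mod_cast (Nat.cast_ne_zero (R := ℂ)).mpr (Nat.one_le_iff_ne_zero.mp hN)) one_ne_zero
    simpa using this
  have hsep : (minpoly ℂ M).Separable := hsepXN.of_dvd hdvd
  have hnodup : (minpoly ℂ M).roots.Nodup := Polynomial.nodup_roots hsep
  have hsubset : ∀ z ∈ (minpoly ℂ M).roots, z ∈ r := by
    intro z hz
    exact Multiset.subset_of_le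
      (Polynomial.roots.le_of_dvd (Matrix.charpoly_monic M).ne_zero
        (Matrix.minpoly_dvd_charpoly M)) hz
  have hmono : (minpoly ℂ M).Monic := minpoly.monic hint
  have hsplits : (minpoly ℂ M).Splits := IsAlgClosed.splits (minpoly ℂ M)
  have hdegpos : 0 < (minpoly ℂ M).natDegree := minpoly.natDegree_pos hint
  have hcardroots : Multiset.card (minpoly ℂ M).roots = (minpoly ℂ M).natDegree :=
    Polynomial.splits_iff_card_roots.mp hsplits
  have hle : Multiset.card (minpoly ℂ M).roots ≤ 1 := by
    rw [← Multiset.toFinset_card_of_nodup hnodup]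
    have hsub : (minpoly ℂ M).roots.toFinset ⊆ {1} := by
      intro z hz
      simp only [Finset.mem_singleton]
      exact hallone z (hsubset z (Multiset.mem_toFinset.mp hz))
    calc (minpoly ℂ M).roots.toFinset.card ≤ ({1} : Finset ℂ).card := Finset.card_le_card hsub
    _ = 1 := by simp
  have hcard1 : Multiset.card (minpoly ℂ M).roots = 1 := le_antisymm hle (by omega)
  obtain ⟨a, ha⟩ := Multiset.card_eq_one.mp hcard1
  have ha1 : a = 1 := hallone a (hsubset a (by rw [ha]; simp))
  have hq : minpoly ℂ M = Polynomial.X - 1 := by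
    have := hsplits.eq_prod_roots_of_monic hmono
    rw [ha, ha1] at this
    simpa using this
  have := minpoly.aeval ℂ M
  rw [hq] at this
  simp only [map_sub, Polynomial.aeval_X, map_one] at this
  rw [sub_eq_zero] at this
  exact this


private lemma aux_burnside {n N : ℕ} (hn : 1 ≤ n) (hN : 1 ≤ N)
    {Γ : Type} [Group Γ] (ρ : Γ →* Matrix (Fin n) (Fin n) ℂ)
    (hinj : Function.Injective ρ)
    (hord : ∀ γ : Γ, ρ γ ^ N = 1)
    (htr : ∀ M : Matrix (Fin n) (Fin n) ℂ, M ^ N = 1 → M.trace = (n : ℂ) → M = 1) :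
    Finite Γ := by
  -- the set of possible traces
  set T : Set ℂ := {z : ℂ | ∃ s : Multiset ℂ, Multiset.card s = n ∧ (∀ w ∈ s, w ^ N = 1) ∧ s.sum = z}
    with hT
  have hTfin : T.Finite := by
    have hroots : {w : ℂ | w ^ N = 1}.Finite := by
      have : {w : ℂ | w ^ N = 1} ⊆ {w : ℂ | w ∈ Polynomial.nthRoots N (1 : ℂ)} := by
        intro w hw
        simp only [Set.mem_setOf_eq]
        exact (Polynomial.mem_nthRoots (by omega)).mpr hw
      exact Set.Finite.subset (Polynomial.nthRoots N (1 : ℂ)).finite_toSet this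
    -- T is the image of functions Fin n → roots under sum
    have hsub : T ⊆ (fun f : Fin n → ℂ => ∑ i, f i) '' {f | ∀ i, f i ∈ {w : ℂ | w ^ N = 1}} := by
      rintro z ⟨s, hcard, hmem, hsum⟩
      obtain ⟨l, hl⟩ : ∃ l : List ℂ, s = (l : Multiset ℂ) := ⟨s.toList, (Multiset.coe_toList s).symm⟩
      have hlen : l.length = n := by
        rw [hl] at hcard; simpa using hcard
      refine ⟨fun i => l.get (Fin.cast hlen.symm i), fun i => ?_, ?_⟩
      · apply hmem
        rw [hl]
        exact List.get_mem l _
      · have : ∑ i : Fin l.length, l.get i = l.sum := by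
          simpa using Fin.sum_univ_get l
        rw [← hsum, hl]
        rw [Multiset.sum_coe, ← this]
        exact Fintype.sum_equiv (finCongr hlen.symm) _ _ (fun i => rfl)
    apply Set.Finite.subset _ hsub
    apply Set.Finite.image
    have : {f : Fin n → ℂ | ∀ i, f i ∈ {w : ℂ | w ^ N = 1}} = Set.pi Set.univ (fun _ => {w : ℂ | w ^ N = 1}) := by
      ext f; simp [Set.mem_pi]
    rw [this]
    exact Set.Finite.pi (fun _ => hroots)
  -- the span of the image
  obtain ⟨s, hs_sub, hs_span, hs_li⟩ := exists_linearIndependent ℂ (Set.range ρ)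
  have hs_fin : s.Finite := by
    haveI := hs_li.finite
    exact s.toFinite
  -- trace of any product lies in T
  have htrT : ∀ γ : Γ, (ρ γ).trace ∈ T := by
    intro γ
    obtain ⟨r, hcard, hpow, hsum⟩ := aux_trace_mem hn hN (hord γ)
    exact ⟨r, hcard, hpow, hsum⟩
  -- the injection
  have key : ∀ γ₁ γ₂ : Γ, (∀ b ∈ s, (ρ γ₁ * b).trace = (ρ γ₂ * b).trace) → γ₁ = γ₂ := by
    intro γ₁ γ₂ hball
    set L : Matrix (Fin n) (Fin n) ℂ →ₗ[ℂ] ℂ :=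
      (Matrix.traceLinearMap (Fin n) ℂ ℂ).comp (LinearMap.mulLeft ℂ (ρ γ₁ - ρ γ₂)) with hL
    have hLzero : ∀ b ∈ s, L b = 0 := by
      intro b hb
      simp only [hL, LinearMap.comp_apply, LinearMap.mulLeft_apply, Matrix.traceLinearMap_apply]
      rw [sub_mul, Matrix.trace_sub, hball b hb, sub_self]
    have hker : Submodule.span ℂ s ≤ LinearMap.ker L := by
      rw [Submodule.span_le]
      intro b hb
      exact hLzero b hb
    have hmem : ρ γ₁⁻¹ ∈ Submodule.span ℂ s := by
      rw [hs_span]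
      exact Submodule.subset_span ⟨γ₁⁻¹, rfl⟩
    have hLz : L (ρ γ₁⁻¹) = 0 := hker hmem
    simp only [hL, LinearMap.comp_apply, LinearMap.mulLeft_apply, Matrix.traceLinearMap_apply] at hLz
    rw [sub_mul, Matrix.trace_sub, ← map_mul, ← map_mul, mul_inv_cancel, map_one, Matrix.trace_one,
      sub_eq_zero] at hLz
    have h2 : ρ (γ₂ * γ₁⁻¹) = 1 := by
      apply htr _ (hord _)
      rw [← hLz]
      simp [Fintype.card_fin]
    have h3 : γ₂ * γ₁⁻¹ = 1 := hinj (by rw [h2, map_one])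
    have := mul_inv_eq_one.mp h3
    exact this.symm
  -- build the injection into a finite type
  haveI : Finite ↥s := hs_fin.to_subtype
  haveI : Finite ↥T := hTfin.to_subtype
  apply Finite.of_injective (fun γ : Γ => fun b : ↥s => (⟨(ρ γ * b.1).trace, by
    obtain ⟨δ, hδ⟩ := hs_sub b.2
    rw [← hδ, ← map_mul]
    exact htrT _⟩ : ↥T))
  intro γ₁ γ₂ h
  apply key γ₁ γ₂
  intro b hb
  have := congrFun h ⟨b, hb⟩
  exact Subtype.ext_iff.mp this

/-- A group of holomorphic permutations of a nonempty connected open set `U ⊆ ℂⁿ`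
fixing a point `p ∈ U` which admits a fundamental system of `G`-invariant
neighborhoods of `p` inside `U`, all of whose points have finite `G`-orbit,
is finite. -/
theorem finite_of_invariant_fundamental_system
    {n : ℕ} (hn : 1 ≤ n) (U : Set (Fin n → ℂ)) (hUne : U.Nonempty)
    (hUo : IsOpen U) (hUc : IsConnected U)
    (G : Subgroup (Equiv.Perm U))
    (hhol : ∀ g ∈ G, ∀ x ∈ U, AnalyticAt ℂ
      (fun y => if h : y ∈ U then ((g ⟨y, h⟩ : U) : Fin n → ℂ) else y) x)
    (p : U) (hfix : ∀ g ∈ G, g p = p)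
    (ι : Type) (V : ι → Set (Fin n → ℂ))
    (hVsub : ∀ ν, V ν ⊆ U)
    (hVnhds : ∀ ν, V ν ∈ nhds (p : Fin n → ℂ))
    (hVfund : ∀ W ∈ nhds (p : Fin n → ℂ), ∃ ν, V ν ⊆ W)
    (hVinv : ∀ ν, ∀ g ∈ G, ∀ x : U, (x : Fin n → ℂ) ∈ V ν ↔ (g x : Fin n → ℂ) ∈ V ν)
    (hVorb : ∀ ν, ∀ x : U, (x : Fin n → ℂ) ∈ V ν → (MulAction.orbit G x).Finite) :
    Finite G := by
  classical
  set F : Equiv.Perm U → (Fin n → ℂ) → (Fin n → ℂ) :=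
    fun e y => if h : y ∈ U then ((e ⟨y, h⟩ : U) : Fin n → ℂ) else y with hFdef
  have hFval : ∀ (e : Equiv.Perm U) (x : U), F e ↑x = ↑(e x) := by
    intro e x
    simp only [hFdef, dif_pos x.2, Subtype.coe_eta]
  have hFanal : ∀ γ : G, ∀ y ∈ U, AnalyticAt ℂ (F ↑γ) y :=
    fun γ y hy => hhol ↑γ γ.2 y hy
  have hFU : ∀ (e : Equiv.Perm U) (y : Fin n → ℂ), y ∈ U → F e y ∈ U := by
    intro e y hy
    simp only [hFdef, dif_pos hy]
    exact (e ⟨y, hy⟩).2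
  have hFmul : ∀ γ δ : G, ∀ y ∈ U, F ↑(γ * δ) y = F ↑γ (F ↑δ y) := by
    intro γ δ y hy
    have h1 : F ↑δ y = ↑((δ : Equiv.Perm U) ⟨y, hy⟩) := by
      simp only [hFdef, dif_pos hy]
    rw [h1]
    rw [hFval]
    have h2 : F ↑(γ * δ) y = ↑(((γ * δ : G) : Equiv.Perm U) ⟨y, hy⟩) := by
      simp only [hFdef, dif_pos hy]
    rw [h2]
    rw [Subgroup.coe_mul, Equiv.Perm.mul_apply]
  have hFone : ∀ y ∈ U, F ↑(1 : G) y = y := by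
    intro y hy
    simp only [hFdef, dif_pos hy, OneMemClass.coe_one, Equiv.Perm.coe_one, id_eq]
  have hFp : ∀ γ : G, F ↑γ ↑p = ↑p := by
    intro γ
    rw [hFval, hfix ↑γ γ.2]
  -- identity theorem
  have hident : ∀ γ : G, ∀ O : Set (Fin n → ℂ), IsOpen O → O.Nonempty → O ⊆ U →
      (∀ y ∈ O, F ↑γ y = y) → γ = 1 := by
    intro γ O hOopen hOne hOU hOeq
    obtain ⟨z₀, hz₀⟩ := hOne
    have h1 : AnalyticOnNhd ℂ (F ↑γ) U := fun y hy => hFanal γ y hy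
    have h2 : AnalyticOnNhd ℂ id U := analyticOnNhd_id
    have hev : F ↑γ =ᶠ[nhds z₀] id := by
      filter_upwards [hOopen.mem_nhds hz₀] with y hy
      exact hOeq y hy
    have heq : Set.EqOn (F ↑γ) id U :=
      h1.eqOn_of_preconnected_of_eventuallyEq h2 hUc.isPreconnected (hOU hz₀) hev
    have hγ1 : (γ : Equiv.Perm U) = 1 := by
      apply Equiv.ext
      intro X
      apply Subtype.ext
      have := heq X.2
      rw [hFval] at this
      exact this
    exact Subtype.ext hγ1
  -- choice of an invariant neighborhood and a closed ball inside it
  obtain ⟨ν₀, -⟩ := hVfund Set.univ Filter.univ_mem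
  obtain ⟨r, hr0, hrB⟩ := Metric.nhds_basis_closedBall.mem_iff.mp
    (Filter.inter_mem (hVnhds ν₀) (hUo.mem_nhds p.2))
  set B := Metric.closedBall (↑p : Fin n → ℂ) r with hBdef
  have hBV : B ⊆ V ν₀ := fun y hy => (hrB hy).1
  have hBU : B ⊆ U := fun y hy => (hrB hy).2
  -- the closed pieces
  set S : ℕ → Set (Fin n → ℂ) := fun m =>
    {y | y ∈ B ∧ ∀ g : Fin (m + 1) → G, ∃ i j, i ≠ j ∧ F ↑(g i) y = F ↑(g j) y} with hSdef
  have hBcomp : IsCompact B := isCompact_closedBall _ _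
  haveI hBcs : CompactSpace B := isCompact_iff_compactSpace.mp hBcomp
  have hEclosed : ∀ γ δ : G, IsClosed {y | y ∈ B ∧ F ↑γ y = F ↑δ y} := by
    intro γ δ
    have hres : ∀ ε : G, Continuous (fun y : B => F ↑ε ↑y) := by
      intro ε
      show Continuous (B.restrict (F ↑ε))
      exact ContinuousOn.restrict
        (fun y hy => (hFanal ε y (hBU hy)).continuousAt.continuousWithinAt)
    have hcl : IsClosed {y : B | F ↑γ ↑y = F ↑δ ↑y} := isClosed_eq (hres γ) (hres δ)
    have himg : Subtype.val '' {y : B | F ↑γ ↑y = F ↑δ ↑y} = {y | y ∈ B ∧ F ↑γ y = F ↑δ y} := by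
      ext y
      constructor
      · rintro ⟨⟨z, hz⟩, hmem, rfl⟩
        exact ⟨hz, hmem⟩
      · rintro ⟨hy, heq⟩
        exact ⟨⟨y, hy⟩, heq, rfl⟩
    rw [← himg]
    exact ((hcl.isCompact).image continuous_subtype_val).isClosed
  have hSclosed : ∀ m, IsClosed (S m) := by
    intro m
    have hrepr : S m = ⋂ (g : Fin (m + 1) → G), ⋃ (i : Fin (m + 1)) (j : Fin (m + 1)) (_ : i ≠ j),
        {y | y ∈ B ∧ F ↑(g i) y = F ↑(g j) y} := by
      ext y
      simp only [hSdef, Set.mem_setOf_eq, Set.mem_iInter, Set.mem_iUnion]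
      constructor
      · rintro ⟨hyB, hy⟩ g
        obtain ⟨i, j, hij, heq⟩ := hy g
        exact ⟨i, j, hij, hyB, heq⟩
      · intro h
        have h1 := h (fun _ => 1)
        obtain ⟨i, j, hij, hyB, -⟩ := h1
        refine ⟨hyB, fun g => ?_⟩
        obtain ⟨i, j, hij, -, heq⟩ := h g
        exact ⟨i, j, hij, heq⟩
    rw [hrepr]
    apply isClosed_iInter
    intro g
    apply isClosed_iUnion_of_finite
    intro i
    apply isClosed_iUnion_of_finite
    intro j
    apply isClosed_iUnion_of_finite
    intro _
    exact hEclosed _ _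
  have hScover : ∀ y ∈ B, ∃ m, y ∈ S m := by
    intro y hyB
    have hyU : y ∈ U := hBU hyB
    have horb : (MulAction.orbit G (⟨y, hyU⟩ : U)).Finite := hVorb ν₀ ⟨y, hyU⟩ (hBV hyB)
    set t := horb.toFinset with htdef
    refine ⟨t.card, hyB, fun g => ?_⟩
    have hmap : ∀ i : Fin (t.card + 1), ((g i : Equiv.Perm U) ⟨y, hyU⟩) ∈ t := by
      intro i
      rw [htdef, Set.Finite.mem_toFinset]
      exact ⟨g i, rfl⟩
    obtain ⟨i, j, hij, heq⟩ := Fintype.exists_ne_map_eq_of_card_lt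
      (fun i : Fin (t.card + 1) => (⟨_, hmap i⟩ : {z // z ∈ t}))
      (by simp [Fintype.card_coe])
    refine ⟨i, j, hij, ?_⟩
    have h2 : ((g i : Equiv.Perm U) ⟨y, hyU⟩) = ((g j : Equiv.Perm U) ⟨y, hyU⟩) :=
      Subtype.ext_iff.mp heq
    have h3 : F ↑(g i) y = ↑((g i : Equiv.Perm U) ⟨y, hyU⟩) := by
      simp only [hFdef, dif_pos hyU]
    have h4 : F ↑(g j) y = ↑((g j : Equiv.Perm U) ⟨y, hyU⟩) := by
      simp only [hFdef, dif_pos hyU]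
    rw [h3, h4, h2]
  -- Baire category
  obtain ⟨m, W', hW'open, hW'ne, hW'S⟩ :
      ∃ m W', IsOpen W' ∧ W'.Nonempty ∧ W' ⊆ S m := by
    set f : ℕ → Set (Fin n → ℂ) := fun k => Nat.casesOn k (closure Bᶜ) S with hfdef
    have hfc : ∀ k, IsClosed (f k) := by
      intro k
      cases k with
      | zero => exact isClosed_closure
      | succ m => exact hSclosed m
    have hfU : (⋃ k, f k) = Set.univ := by
      ext y
      simp only [Set.mem_iUnion, Set.mem_univ, iff_true]
      by_cases hy : y ∈ B
      · obtain ⟨m, hm⟩ := hScover y hy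
        exact ⟨m + 1, hm⟩
      · exact ⟨0, subset_closure hy⟩
    have hdense := dense_iUnion_interior_of_closed hfc hfU
    obtain ⟨x, hxU, hxball⟩ := hdense.exists_mem_open Metric.isOpen_ball
      ⟨↑p, Metric.mem_ball_self hr0⟩
    rw [Set.mem_iUnion] at hxU
    obtain ⟨k, hk⟩ := hxU
    match k, hk with
    | 0, hk => 
        exfalso
        obtain ⟨z, hz1, hz2⟩ := (mem_closure_iff.mp (interior_subset hk))
          (Metric.ball ↑p r) Metric.isOpen_ball hxball
        exact hz2 (Metric.ball_subset_closedBall hz1)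
    | (m + 1), hk =>
        exact ⟨m, interior (S m) ∩ Metric.ball ↑p r,
          isOpen_interior.inter Metric.isOpen_ball, ⟨x, hk, hxball⟩,
          (Set.inter_subset_left).trans interior_subset⟩
  have hW'U : W' ⊆ U := fun y hy => hBU (hW'S hy).1
  set N := m.factorial with hNdef
  have hNpos : 1 ≤ N := Nat.factorial_pos m
  -- uniform order
  have horder : ∀ γ : G, γ ^ N = 1 := by
    intro γ
    apply hident (γ ^ N) W' hW'open hW'ne hW'U
    intro y hy
    have hyU : y ∈ U := hW'U hy
    obtain ⟨i, j, hij, heq⟩ := (hW'S hy).2 (fun i : Fin (m + 1) => γ ^ (i : ℕ))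
    have hYeq : ∀ k : ℕ, F ↑(γ ^ k) y = ↑(((γ ^ k : G) : Equiv.Perm U) ⟨y, hyU⟩) := by
      intro k
      simp only [hFdef, dif_pos hyU]
    have key : ∀ a b : ℕ, a < b → b ≤ m →
        ((γ ^ a : G) : Equiv.Perm U) ⟨y, hyU⟩ = ((γ ^ b : G) : Equiv.Perm U) ⟨y, hyU⟩ →
        F ↑(γ ^ N) y = y := by
      intro a b hab hbm heq'
      set Y : U := (⟨y, hyU⟩ : U) with hYdef
      have hsplit : (γ ^ a) * (γ ^ (b - a)) = γ ^ b := by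
        rw [← pow_add]
        congr 1
        omega
      have h1 : ((γ ^ a : G) : Equiv.Perm U) (((γ ^ (b - a) : G) : Equiv.Perm U) Y)
          = ((γ ^ a : G) : Equiv.Perm U) Y := by
        rw [← Equiv.Perm.mul_apply, ← Subgroup.coe_mul, hsplit, ← heq']
      have h2 : ((γ ^ (b - a) : G) : Equiv.Perm U) Y = Y := (Equiv.injective _) h1
      have hdvd : (b - a) ∣ N := by
        rw [hNdef]
        exact Nat.dvd_factorial (by omega) (by omega)
      obtain ⟨c, hc⟩ := hdvd
      have hiter : ∀ t : ℕ, (((γ ^ (b - a)) ^ t : G) : Equiv.Perm U) Y = Y := by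
        intro t
        induction t with
        | zero => simp
        | succ t ih =>
            rw [pow_succ', Subgroup.coe_mul, Equiv.Perm.mul_apply, ih, h2]
      have hNY : ((γ ^ N : G) : Equiv.Perm U) Y = Y := by
        rw [hc, pow_mul]
        exact hiter c
      rw [hYeq N]
      rw [hYdef] at hNY
      rw [hNY]
    have heqU : ((γ ^ (i : ℕ) : G) : Equiv.Perm U) ⟨y, hyU⟩
        = ((γ ^ (j : ℕ) : G) : Equiv.Perm U) ⟨y, hyU⟩ := by
      apply Subtype.ext
      rw [← hYeq, ← hYeq]
      exact heq
    have hij' : (i : ℕ) ≠ (j : ℕ) := fun h => hij (Fin.ext h)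
    rcases hij'.lt_or_gt with hlt | hlt
    · exact key i j hlt (by omega) heqU
    · exact key j i hlt (by omega) heqU.symm
  -- derivative representation
  set D : G → ((Fin n → ℂ) →L[ℂ] (Fin n → ℂ)) := fun γ => fderiv ℂ (F ↑γ) ↑p with hDdef
  have hDmul : ∀ γ δ : G, D (γ * δ) = (D γ).comp (D δ) := by
    intro γ δ
    have hdiffγ : DifferentiableAt ℂ (F ↑γ) (F ↑δ ↑p) := by
      rw [hFp δ]
      exact (hFanal γ ↑p p.2).differentiableAt
    have hdiffδ : DifferentiableAt ℂ (F ↑δ) ↑p := (hFanal δ ↑p p.2).differentiableAt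
    have hev : F ↑(γ * δ) =ᶠ[nhds (↑p : Fin n → ℂ)] (F ↑γ ∘ F ↑δ) := by
      filter_upwards [hUo.mem_nhds p.2] with y hy
      exact hFmul γ δ y hy
    show fderiv ℂ (F ↑(γ * δ)) ↑p = (D γ).comp (D δ)
    rw [hev.fderiv_eq, fderiv_comp _ hdiffγ hdiffδ, hFp δ]
  have hD1 : D 1 = ContinuousLinearMap.id ℂ (Fin n → ℂ) := by
    have hev : F ↑(1 : G) =ᶠ[nhds (↑p : Fin n → ℂ)] id := by
      filter_upwards [hUo.mem_nhds p.2] with y hy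
      exact hFone y hy
    show fderiv ℂ (F ↑(1 : G)) ↑p = ContinuousLinearMap.id ℂ (Fin n → ℂ)
    rw [hev.fderiv_eq, fderiv_id]
  have hDpow : ∀ γ : G, D γ = ContinuousLinearMap.id ℂ (Fin n → ℂ) →
      ∀ k : ℕ, D (γ ^ k) = ContinuousLinearMap.id ℂ (Fin n → ℂ) := by
    intro γ hγ k
    induction k with
    | zero => simpa using hD1
    | succ k ih =>
        rw [pow_succ, hDmul, ih, hγ]
        ext y
        simp
  -- Bochner linearization: trivial derivative forces the identity
  have hDinj : ∀ γ : G, D γ = ContinuousLinearMap.id ℂ (Fin n → ℂ) → γ = 1 := by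
    intro γ hγ
    have hNC : ((N : ℂ)) ≠ 0 := by
      exact_mod_cast Nat.cast_ne_zero.mpr (by omega)
    set hmap : (Fin n → ℂ) → (Fin n → ℂ) :=
      fun y => (N : ℂ)⁻¹ • ∑ k ∈ Finset.range N, F ↑(γ ^ k) y with hhdef
    have hanal : AnalyticAt ℂ hmap ↑p := by
      apply AnalyticAt.fun_smul
      · exact analyticAt_const
      · exact (Finset.range N).analyticAt_fun_sum (fun k _ => hFanal (γ ^ k) ↑p p.2)
    have hksum : HasFDerivAt (fun y => ∑ k ∈ Finset.range N, F ↑(γ ^ k) y)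
        (∑ _k ∈ Finset.range N, ContinuousLinearMap.id ℂ (Fin n → ℂ)) ↑p := by
      apply HasFDerivAt.fun_sum
      intro k _
      have hdiff : DifferentiableAt ℂ (F ↑(γ ^ k)) ↑p := (hFanal _ _ p.2).differentiableAt
      have h2 := hdiff.hasFDerivAt
      rwa [show fderiv ℂ (F ↑(γ ^ k)) ↑p = ContinuousLinearMap.id ℂ (Fin n → ℂ) from
        hDpow γ hγ k] at h2
    have hderiv : HasFDerivAt hmap (ContinuousLinearMap.id ℂ (Fin n → ℂ)) ↑p := by
      have h2 := hksum.const_smul ((N : ℂ)⁻¹)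
      have h3 : (N : ℂ)⁻¹ • (∑ _k ∈ Finset.range N, ContinuousLinearMap.id ℂ (Fin n → ℂ))
          = ContinuousLinearMap.id ℂ (Fin n → ℂ) := by
        rw [Finset.sum_const, Finset.card_range, ← Nat.cast_smul_eq_nsmul ℂ, smul_smul,
          inv_mul_cancel₀ hNC, one_smul]
      rwa [h3] at h2
    have hstrict := hanal.hasStrictFDerivAt
    rw [hderiv.fderiv] at hstrict
    have hstrict' : HasStrictFDerivAt hmap
        ((ContinuousLinearEquiv.refl ℂ (Fin n → ℂ) :
          (Fin n → ℂ) ≃L[ℂ] (Fin n → ℂ)) : (Fin n → ℂ) →L[ℂ] (Fin n → ℂ)) ↑p := by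
      simpa using hstrict
    set PH := hstrict'.toOpenPartialHomeomorph hmap with hPHdef
    have hsrc : (↑p : Fin n → ℂ) ∈ PH.source := hstrict'.mem_toOpenPartialHomeomorph_source
    have hinjOn : Set.InjOn hmap PH.source := PH.injOn
    have hcomm : ∀ y ∈ U, hmap (F ↑γ y) = hmap y := by
      intro y hyU'
      show (N : ℂ)⁻¹ • ∑ k ∈ Finset.range N, F ↑(γ ^ k) (F ↑γ y)
        = (N : ℂ)⁻¹ • ∑ k ∈ Finset.range N, F ↑(γ ^ k) y
      congr 1
      have hterm : ∀ k, F ↑(γ ^ k) (F ↑γ y) = F ↑(γ ^ (k + 1)) y := by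
        intro k
        rw [pow_succ, hFmul (γ ^ k) γ y hyU']
      rw [Finset.sum_congr rfl (fun k _ => hterm k)]
      have hNγ : F ↑(γ ^ N) y = y := by
        rw [horder γ]
        exact hFone y hyU'
      have h0 : F ↑(γ ^ 0) y = y := by
        rw [pow_zero]
        exact hFone y hyU'
      have e1 := Finset.sum_range_succ' (fun k => F ↑(γ ^ k) y) N
      have e2 := Finset.sum_range_succ (fun k => F ↑(γ ^ k) y) N
      rw [e2] at e1
      rw [hNγ, h0] at e1
      exact add_right_cancel e1.symm
    have hcont : ContinuousAt (F ↑γ) ↑p := (hFanal γ ↑p p.2).continuousAt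
    have hpre : (F ↑γ) ⁻¹' PH.source ∈ nhds (↑p : Fin n → ℂ) := by
      apply hcont.preimage_mem_nhds
      apply PH.open_source.mem_nhds
      rw [hFp γ]
      exact hsrc
    have hnhd : U ∩ PH.source ∩ (F ↑γ) ⁻¹' PH.source ∈ nhds (↑p : Fin n → ℂ) :=
      Filter.inter_mem (Filter.inter_mem (hUo.mem_nhds p.2)
        (PH.open_source.mem_nhds hsrc)) hpre
    obtain ⟨O, hOsub, hOopen, hpO⟩ := mem_nhds_iff.mp hnhd
    apply hident γ O hOopen ⟨↑p, hpO⟩ (fun y hy => (hOsub hy).1.1)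
    intro y hyO
    obtain ⟨⟨hyU', hysrc⟩, hypre⟩ := hOsub hyO
    exact hinjOn hypre hysrc (hcomm y hyU')
  -- conclusion via the linear representation
  have hDinv : ∀ γ : G, (D γ).comp (D γ⁻¹) = ContinuousLinearMap.id ℂ (Fin n → ℂ) := by
    intro γ
    rw [← hDmul, mul_inv_cancel, hD1]
  set ρ : G →* Matrix (Fin n) (Fin n) ℂ :=
    { toFun := fun γ => LinearMap.toMatrixAlgEquiv' ((D γ : (Fin n → ℂ) →ₗ[ℂ] (Fin n → ℂ)))
      map_one' := by
        show LinearMap.toMatrixAlgEquiv' ((D 1 : (Fin n → ℂ) →ₗ[ℂ] (Fin n → ℂ))) = 1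
        rw [hD1]
        simp
      map_mul' := by
        intro γ δ
        show LinearMap.toMatrixAlgEquiv' ((D (γ * δ) : (Fin n → ℂ) →ₗ[ℂ] (Fin n → ℂ)))
          = LinearMap.toMatrixAlgEquiv' ((D γ : (Fin n → ℂ) →ₗ[ℂ] (Fin n → ℂ)))
            * LinearMap.toMatrixAlgEquiv' ((D δ : (Fin n → ℂ) →ₗ[ℂ] (Fin n → ℂ)))
        rw [hDmul, ContinuousLinearMap.toLinearMap_comp, ← Module.End.mul_eq_comp, map_mul] } with hρdef
  have hρinj : Function.Injective ρ := by
    intro γ₁ γ₂ h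
    have hD12 : D γ₁ = D γ₂ := by
      have h2 := LinearMap.toMatrixAlgEquiv'.injective h
      exact ContinuousLinearMap.coe_injective h2
    have : D (γ₁ * γ₂⁻¹) = ContinuousLinearMap.id ℂ (Fin n → ℂ) := by
      rw [hDmul, hD12, ← hDmul, mul_inv_cancel, hD1]
    have h3 := hDinj _ this
    exact mul_inv_eq_one.mp h3
  have hρord : ∀ γ : G, ρ γ ^ N = 1 := by
    intro γ
    rw [← map_pow, horder γ, map_one]
  exact aux_burnside hn hNpos ρ hρinj hρord
    (fun M h1 h2 => aux_eq_one_of_trace hn hNpos h1 h2)
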